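/- Let s, t be positive integers, p ∈ ℂ, q ∈ ℂ with q ≠ 0, and f(z) = z^{s+t} + p z^t + q. For v > 0, f has a root of norm v if and only if there exists φ ∈ [0, 2π) with p = −v^s·e^{i·s·φ} − |q|·v^{−t}·e^{i·(arg(q) − t·φ)}. (Equivalently: p lies, up to rotation, on the hypotrochoid with parameters R = v^s·(s+t)/t, r = v^s·s/t, d = |q|·v^{−t}.) -/

import Mathlib

open Polynomial

private lemma hypo_eq (s t : ℕ) (p q : ℂ) (v : ℝ) (hv : 0 < v) (φ : ℝ) :
    ((X ^ (s + t) + C p * X ^ t + C q : Polynomial ℂ).eval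
        ((v : ℂ) * Complex.exp (Complex.I * φ)) = 0) ↔
    p = -((v : ℂ) ^ s * Complex.exp (Complex.I * s * φ))
        - (‖q‖ : ℂ) * (v : ℂ) ^ (-(t : ℤ)) *
            Complex.exp (Complex.I * ((q.arg : ℂ) - t * φ)) := by
  have hv0 : (v : ℂ) ≠ 0 := by exact_mod_cast hv.ne'
  set z : ℂ := (v : ℂ) * Complex.exp (Complex.I * φ) with hzdef
  have hzne : z ≠ 0 := mul_ne_zero hv0 (Complex.exp_ne_zero _)
  have hzt : z ^ t ≠ 0 := pow_ne_zero _ hzne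
  have hztv : z ^ t = (v:ℂ)^t * Complex.exp (Complex.I * t * φ) := by
    rw [hzdef, mul_pow, ← Complex.exp_nat_mul]; ring_nf
  have hzst : z ^ (s+t) = (v:ℂ)^(s+t) * Complex.exp (Complex.I * (↑(s+t):ℂ) * φ) := by
    rw [hzdef, mul_pow, ← Complex.exp_nat_mul]; ring_nf
  have e1 : Complex.exp (Complex.I*s*φ) * Complex.exp (Complex.I*t*φ)
      = Complex.exp (Complex.I*(↑(s+t):ℂ)*φ) := by
    rw [← Complex.exp_add]; push_cast; ring_nf
  have e2 : Complex.exp (Complex.I*((q.arg : ℂ) - t*φ)) * Complex.exp (Complex.I*t*φ)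
      = Complex.exp ((q.arg : ℂ) * Complex.I) := by
    rw [← Complex.exp_add]; ring_nf
  have hq' : (‖q‖ : ℂ) * Complex.exp ((q.arg : ℂ) * Complex.I) = q :=
    Complex.norm_mul_exp_arg_mul_I q
  have hvinv : (v:ℂ)^(-(t:ℤ)) * (v:ℂ)^t = 1 := by
    rw [zpow_neg, zpow_natCast]; exact inv_mul_cancel₀ (pow_ne_zero _ hv0)
  have hmul : (-((v : ℂ) ^ s * Complex.exp (Complex.I * s * φ))
        - (‖q‖ : ℂ) * (v : ℂ) ^ (-(t : ℤ)) *
            Complex.exp (Complex.I * ((q.arg : ℂ) - t * φ))) * z ^ t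
      = -z^(s+t) - q := by
    rw [hztv, hzst, pow_add]
    linear_combination (-(v:ℂ)^s * (v:ℂ)^t) * e1
      + (-(‖q‖ : ℂ) * ((v:ℂ)^(-(t:ℤ)) * (v:ℂ)^t)) * e2
      + (-(‖q‖ : ℂ) * Complex.exp ((q.arg : ℂ) * Complex.I)) * hvinv
      - hq'
  have heval : (X ^ (s + t) + C p * X ^ t + C q : Polynomial ℂ).eval z
      = z ^ (s + t) + p * z ^ t + q := by simp
  rw [heval]
  constructor
  · intro h
    have := mul_right_cancel₀ hzt (by rw [hmul]; linear_combination h :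
      p * z ^ t = (-((v : ℂ) ^ s * Complex.exp (Complex.I * s * φ))
        - (‖q‖ : ℂ) * (v : ℂ) ^ (-(t : ℤ)) *
            Complex.exp (Complex.I * ((q.arg : ℂ) - t * φ))) * z ^ t)
    exact this
  · intro h
    rw [h]
    linear_combination hmul

/-- The trinomial `z^(s+t) + p z^t + q` has a root of norm `v > 0` if and only
if `p` lies on the hypotrochoid `φ ↦ -v^s e^(isφ) - |q| v^(-t) e^(i(arg q - tφ))`,
i.e. (up to rotation) the hypotrochoid with parameters `R = v^s (s+t)/t`,
`r = v^s s/t`, `d = |q| v^(-t)`. -/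
theorem root_of_norm_iff_on_hypotrochoid (s t : ℕ) (hs : 0 < s) (ht : 0 < t)
    (p q : ℂ) (hq : q ≠ 0) (v : ℝ) (hv : 0 < v) :
    (∃ z : ℂ, (X ^ (s + t) + C p * X ^ t + C q : Polynomial ℂ).eval z = 0 ∧
        ‖z‖ = v) ↔
    ∃ φ ∈ Set.Ico (0 : ℝ) (2 * Real.pi),
      p = -((v : ℂ) ^ s * Complex.exp (Complex.I * s * φ))
        - (‖q‖ : ℂ) * (v : ℂ) ^ (-(t : ℤ)) *
            Complex.exp (Complex.I * ((q.arg : ℂ) - t * φ)) := by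
  constructor
  · rintro ⟨z, hz, habs⟩
    set φ : ℝ := toIcoMod Real.two_pi_pos 0 z.arg with hφ
    set k : ℤ := toIcoDiv Real.two_pi_pos 0 z.arg with hk
    have hmem : φ ∈ Set.Ico (0:ℝ) (2 * Real.pi) := by
      have := toIcoMod_mem_Ico Real.two_pi_pos 0 z.arg
      simpa using this
    have harg : z.arg = φ + k * (2 * Real.pi) := by
      rw [hφ, hk, toIcoMod]
      push_cast [zsmul_eq_mul]
      ring
    have hzeq : z = (v : ℂ) * Complex.exp (Complex.I * φ) := by
      conv_lhs => rw [← Complex.norm_mul_exp_arg_mul_I z]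
      rw [habs, harg]
      rw [show ((↑(φ + ↑k * (2 * Real.pi)) : ℂ) * Complex.I)
          = Complex.I * φ + k * (2 * Real.pi * Complex.I) by push_cast; ring]
      rw [Complex.exp_add, Complex.exp_int_mul_two_pi_mul_I, mul_one]
    refine ⟨φ, hmem, ?_⟩
    rw [← hypo_eq s t p q v hv φ, ← hzeq]
    exact hz
  · rintro ⟨φ, _, hp⟩
    refine ⟨(v : ℂ) * Complex.exp (Complex.I * φ), (hypo_eq s t p q v hv φ).mpr hp, ?_⟩
    rw [norm_mul, mul_comm Complex.I (φ:ℂ), Complex.norm_exp_ofReal_mul_I,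
      Complex.norm_real, Real.norm_eq_abs, mul_one, abs_of_pos hv]
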